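/- Let ũ be a bounded function with Aũ + λf(ũ) = 0 (where Aφ = φ − J*φ), f ∈ C²(ℝ), and suppose f′(ũ(x)) ≥ δ > 0 for all x. Then for ε, β > 0 sufficiently small, the functions ū(x,t) = ũ(x) + εe^{−βt} and u̲(x,t) = ũ(x) − εe^{−βt} satisfy P ū + λf(ū) ≥ 0 and P u̲ + λf(u̲) ≤ 0 for all x ∈ ℚ_p^n and t ≥ 0, where Pw = ∂w/∂t − (J*w − w). -/

import Mathlib

open MeasureTheory

/-- If `ũ` is a bounded continuous stationary solution of `Aũ + λf(ũ) = 0`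
(`Aφ = φ - J*φ`), with `f ∈ C²` and `f'(ũ(x)) ≥ δ > 0` for all `x`, then for `ε, β > 0`
sufficiently small, `ū = ũ + εe^{-βt}` is a supersolution and `u̲ = ũ - εe^{-βt}` is a
subsolution: `Pū + λf(ū) ≥ 0` and `Pu̲ + λf(u̲) ≤ 0`, where `Pw = ∂w/∂t - (J*w - w)`. -/
theorem stmt18 (p : ℕ) [Fact p.Prime] (n : ℕ)
    [MeasurableSpace (Fin n → ℚ_[p])] [BorelSpace (Fin n → ℚ_[p])]
    (μ : Measure (Fin n → ℚ_[p])) [μ.IsAddHaarMeasure]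
    (hμ : μ (Metric.closedBall 0 1) = 1)
    (J : ℝ → ℝ)
    (hJc : Continuous fun x : Fin n → ℚ_[p] => J ‖x‖)
    (hJ0 : ∀ x : Fin n → ℚ_[p], 0 ≤ J ‖x‖)
    (hJ1 : ∫ x, J ‖x‖ ∂μ = 1)
    (f : ℝ → ℝ) (hf : ContDiff ℝ 2 f) (lam : ℝ) (hlam : 0 < lam)
    (δ : ℝ) (hδ : 0 < δ)
    (ut : (Fin n → ℚ_[p]) → ℝ) (hcont : Continuous ut)
    (Cb : ℝ) (hb : ∀ x, |ut x| ≤ Cb)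
    (heq : ∀ x, (ut x - ∫ y, J ‖x - y‖ * ut y ∂μ) + lam * f (ut x) = 0)
    (hderiv : ∀ x, δ ≤ deriv f (ut x)) :
    ∃ ε₀ > (0 : ℝ), ∃ β₀ > (0 : ℝ), ∀ ε β : ℝ, 0 < ε → ε ≤ ε₀ → 0 < β → β ≤ β₀ →
      ∀ x : Fin n → ℚ_[p], ∀ t : ℝ, 0 ≤ t →
        (0 ≤ -(β * ε * Real.exp (-(β * t)))
              - ((∫ y, J ‖x - y‖ * (ut y + ε * Real.exp (-(β * t))) ∂μ)
                  - (ut x + ε * Real.exp (-(β * t))))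
              + lam * f (ut x + ε * Real.exp (-(β * t)))) ∧
        (β * ε * Real.exp (-(β * t))
              - ((∫ y, J ‖x - y‖ * (ut y - ε * Real.exp (-(β * t))) ∂μ)
                  - (ut x - ε * Real.exp (-(β * t))))
              + lam * f (ut x - ε * Real.exp (-(β * t))) ≤ 0) := by
  -- regularity of f
  have h2 : ContDiff ℝ ((1:ℕ∞)+1) f := by norm_num; exact hf
  have h1 : ContDiff ℝ 1 (deriv f) := (contDiff_succ_iff_deriv.mp h2).2.2
  have hfd : Differentiable ℝ f := h2.differentiable (by norm_num)
  have hf'd : Differentiable ℝ (deriv f) := h1.differentiable one_ne_zero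
  -- bound on f'' on a compact interval
  set K : Set ℝ := Set.Icc (-Cb - 1) (Cb + 1) with hK
  obtain ⟨M, hM⟩ := (isCompact_Icc (a := -Cb - 1) (b := Cb + 1)).exists_bound_of_continuousOn
    ((contDiff_succ_iff_deriv.mp (show ContDiff ℝ ((0:ℕ∞)+1) (deriv f) by norm_num; exact h1)).2.2.continuous.continuousOn)
  set M' : ℝ := max M 0 + 1 with hM'
  have hM'pos : 0 < M' := by positivity
  have hMle : ∀ y ∈ K, ‖deriv (deriv f) y‖ ≤ M' := fun y hy =>
    (hM y hy).trans (by simp [hM']; nlinarith [le_max_left M 0])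
  -- Lipschitz estimate for deriv f on K
  have hLip : ∀ a ∈ K, ∀ c ∈ K, |deriv f c - deriv f a| ≤ M' * |c - a| := by
    intro a ha c hc
    have := (convex_Icc (-Cb - 1) (Cb + 1)).norm_image_sub_le_of_norm_deriv_le
      (f := deriv f) (fun y _ => hf'd y) hMle ha hc
    simpa [Real.norm_eq_abs] using this
  have hCb : 0 ≤ Cb := le_trans (abs_nonneg _) (hb 0)
  -- choose constants
  refine ⟨min 1 (δ / (2 * M')), by positivity, lam * δ / 2, by positivity,
    fun ε β hε hεle hβ hβle x t ht => ?_⟩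
  obtain ⟨s, hs⟩ : ∃ s : ℝ, s = ε * Real.exp (-(β * t)) := ⟨_, rfl⟩
  have hspos : 0 < s := by rw [hs]; positivity
  have hsε : s ≤ ε := by
    have h1' : Real.exp (-(β * t)) ≤ 1 := Real.exp_le_one_iff.mpr (by nlinarith)
    rw [hs]; nlinarith [Real.exp_pos (-(β * t))]
  have hsle1 : s ≤ 1 := hsε.trans (hεle.trans (min_le_left _ _))
  have hsleδ : s ≤ δ / (2 * M') := hsε.trans (hεle.trans (min_le_right _ _))
  -- derivative lower bound near points in the range of ut
  have hkey : ∀ c : ℝ, |c - ut x| ≤ s → δ / 2 ≤ deriv f c := by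
    intro c hc
    have hax : ut x ∈ K := by
      constructor <;> [nlinarith [abs_le.mp (hb x)]; nlinarith [abs_le.mp (hb x)]]
    have hcx : c ∈ K := by
      have := abs_le.mp hc
      constructor <;> [nlinarith [abs_le.mp (hb x)]; nlinarith [abs_le.mp (hb x)]]
    have hl := hLip (ut x) hax c hcx
    have : |deriv f c - deriv f (ut x)| ≤ M' * s :=
      hl.trans (by nlinarith [abs_nonneg (c - ut x)])
    have hMs : M' * s ≤ δ / 2 := by
      rw [le_div_iff₀ (by positivity)] at hsleδ; nlinarith
    have := abs_le.mp this
    nlinarith [hderiv x]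
  -- integrability
  have hJint0 : Integrable (fun y : Fin n → ℚ_[p] => J ‖y‖) μ := by
    by_contra h
    rw [integral_undef h] at hJ1; norm_num at hJ1
  have hJint : Integrable (fun y => J ‖x - y‖) μ := hJint0.comp_sub_left x
  have hJInteq : ∫ y, J ‖x - y‖ ∂μ = 1 := by
    rw [integral_sub_left_eq_self (fun y : Fin n → ℚ_[p] => J ‖y‖) μ x]; exact hJ1
  have hJutint : Integrable (fun y => J ‖x - y‖ * ut y) μ := by
    have := hJint.bdd_mul hcont.aestronglyMeasurable (c := Cb) (Filter.Eventually.of_forall fun y => by simpa using hb y)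
    exact this.congr (Filter.Eventually.of_forall fun y => mul_comm _ _)
  -- splitting the integrals
  have hsplit : ∀ r : ℝ, ∫ y, J ‖x - y‖ * (ut y + r) ∂μ = (∫ y, J ‖x - y‖ * ut y ∂μ) + r := by
    intro r
    have : (fun y => J ‖x - y‖ * (ut y + r)) = fun y => J ‖x - y‖ * ut y + r * J ‖x - y‖ := by
      funext y; ring
    rw [this, integral_add hJutint (hJint.const_mul r), integral_const_mul, hJInteq, mul_one]
  have hC := heq x
  -- MVT on [ut x, ut x + s]
  have hlt1 : ut x < ut x + s := by linarith
  obtain ⟨c₁, hc₁, hdc₁⟩ := exists_deriv_eq_slope f hlt1 hfd.continuous.continuousOn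
    (hfd.differentiableOn)
  have hfb1 : f (ut x + s) - f (ut x) = deriv f c₁ * s := by
    have he : ut x + s - ut x = s := by ring
    rw [he] at hdc₁
    rw [hdc₁]; field_simp
  have hc₁b : δ / 2 ≤ deriv f c₁ := by
    apply hkey
    rw [abs_le]; exact ⟨by linarith [hc₁.1], by linarith [hc₁.2]⟩
  -- MVT on [ut x - s, ut x]
  have hlt2 : ut x - s < ut x := by linarith
  obtain ⟨c₂, hc₂, hdc₂⟩ := exists_deriv_eq_slope f hlt2 hfd.continuous.continuousOn
    (hfd.differentiableOn)
  have hfb2 : f (ut x) - f (ut x - s) = deriv f c₂ * s := by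
    have he : ut x - (ut x - s) = s := by ring
    rw [he] at hdc₂
    rw [hdc₂]; field_simp
  have hc₂b : δ / 2 ≤ deriv f c₂ := by
    apply hkey
    rw [abs_le]; exact ⟨by linarith [hc₂.1], by linarith [hc₂.2]⟩
  have hsub : ∫ y, J ‖x - y‖ * (ut y - s) ∂μ = (∫ y, J ‖x - y‖ * ut y ∂μ) - s := by
    have := hsplit (-s); simpa [sub_eq_add_neg] using this
  have hβs : β * ε * Real.exp (-(β * t)) = β * s := by rw [hs]; ring
  constructor
  · rw [hβs, ← hs, hsplit s]
    have hlf : lam * (f (ut x + s) - f (ut x)) = lam * (deriv f c₁ * s) := by rw [hfb1]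
    have h1' : lam * (δ / 2 * s) ≤ lam * (deriv f c₁ * s) :=
      mul_le_mul_of_nonneg_left (mul_le_mul_of_nonneg_right hc₁b hspos.le) hlam.le
    have h2' : β * s ≤ lam * δ / 2 * s := mul_le_mul_of_nonneg_right hβle hspos.le
    linarith [hC, hlf, h1', h2']
  · rw [hβs, ← hs, hsub]
    have hlf : lam * (f (ut x) - f (ut x - s)) = lam * (deriv f c₂ * s) := by rw [hfb2]
    have h1' : lam * (δ / 2 * s) ≤ lam * (deriv f c₂ * s) :=
      mul_le_mul_of_nonneg_left (mul_le_mul_of_nonneg_right hc₂b hspos.le) hlam.le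
    have h2' : β * s ≤ lam * δ / 2 * s := mul_le_mul_of_nonneg_right hβle hspos.le
    linarith [hC, hlf, h1', h2']
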